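/- arXiv:1108.3909 — 3 statements merged into one kernel-verified Lean document; each statement's English description precedes it below -/
import Mathlib

section
/- In a pointed regular protomodular category, given a morphism of short exact sequences (k, a, b) from 0 → K' → A' → B' → 0 to 0 → K → A → B → 0, the left-hand square (the one formed by the kernel inclusions, k and a) is a pullback if and only if b is a monomorphism. -/
/-- In the category of groups (a pointed regular protomodular category), given
a morphism `(a, b)` of short exact sequences `0 → ker f' → A' → B' → 0` and
`0 → ker f → A → B → 0`, the left-hand square (formed by the kernel inclusions,
the restriction of `a` and `a`) is a pullback — i.e. `ker f' = a⁻¹(ker f)` —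
if and only if `b` is a monomorphism. -/
theorem left_square_pullback_iff_mono
    {A' B' A B : Type*} [Group A'] [Group B'] [Group A] [Group B]
    (f' : A' →* B') (f : A →* B) (a : A' →* A) (b : B' →* B)
    (hf' : Function.Surjective f') (hf : Function.Surjective f)
    (hcomm : f.comp a = b.comp f') :
    f'.ker = f.ker.comap a ↔ Function.Injective b := by
  constructor
  · intro h
    rw [injective_iff_map_eq_one]
    intro x hx
    obtain ⟨y, rfl⟩ := hf' x
    have hy : a y ∈ f.ker := by
      rw [MonoidHom.mem_ker, ← MonoidHom.comp_apply, hcomm, MonoidHom.comp_apply, hx]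
    have : y ∈ f'.ker := by rw [h]; exact hy
    exact this
  · intro hb
    ext x
    have : f (a x) = b (f' x) := by
      rw [← MonoidHom.comp_apply, hcomm]; rfl
    simp only [MonoidHom.mem_ker, Subgroup.mem_comap, this]
    constructor
    · intro hx; rw [hx, map_one]
    · intro hx
      exact hb (by rw [hx, map_one])
end

section
/- A finitely complete pointed category 𝒜 is unital (the product injections D → D × C and C → D × C are jointly strongly epimorphic for all objects C, D) if, whenever c : X → C and d : X → D are strong epimorphisms whose kernels ker d and ker c are jointly strongly epimorphic, the induced morphism ⟨d, c⟩ : X → D × C is a strong epimorphism. Conversely, if 𝒜 is unital then this latter condition holds. -/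
open CategoryTheory CategoryTheory.Limits

/-- A pair of morphisms with common codomain is jointly strongly epimorphic if
they do not both factor through any proper subobject: any monomorphism through
which both factor is an isomorphism. -/
def JointlyStrongEpi {C : Type*} [Category C] {X Y Z : C}
    (f : X ⟶ Z) (g : Y ⟶ Z) : Prop :=
  ∀ ⦃S : C⦄ (m : S ⟶ Z), Mono m → (∃ u, u ≫ m = f) → (∃ v, v ≫ m = g) → IsIso m

/-- A finitely complete pointed category is unital: for all objects `C`, `D`,
the product injections `D → D × C` and `C → D × C` are jointly strongly
epimorphic. -/
def IsUnital (C : Type*) [Category C] [HasZeroObject C] [HasZeroMorphisms C]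
    [HasFiniteLimits C] : Prop :=
  ∀ D E : C, JointlyStrongEpi (prod.lift (𝟙 D) (0 : D ⟶ E))
    (prod.lift (0 : E ⟶ D) (𝟙 E))

section Aux

variable {C : Type*} [Category C]

/-- A strong epi is extremal: any mono it factors through is iso. -/
lemma isIso_of_strongEpi_fac {X S Y : C} {p : X ⟶ Y} (hp : StrongEpi p)
    {t : X ⟶ S} {m : S ⟶ Y} (hm : Mono m) (h : t ≫ m = p) : IsIso m := by
  have h1 : StrongEpi (t ≫ m) := h ▸ hp
  have h2 : StrongEpi m := strongEpi_of_strongEpi t m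
  exact isIso_of_mono_of_strongEpi m

/-- In a finitely complete category, an extremal epi is a strong epi. -/
lemma strongEpi_of_extremal [HasFiniteLimits C] {X Y : C} (p : X ⟶ Y)
    (h : ∀ ⦃S : C⦄ (m : S ⟶ Y), Mono m → (∃ t, t ≫ m = p) → IsIso m) :
    StrongEpi p := by
  have hepi : Epi p := by
    constructor
    intro Z a b hab
    have := h (equalizer.ι a b) inferInstance
      ⟨equalizer.lift p hab, equalizer.lift_ι _ _⟩
    rw [← cancel_epi (equalizer.ι a b), equalizer.condition]
  constructor
  · exact hepi
  · intro A B z hz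
    constructor
    intro u v sq
    -- sq.w : u ≫ z = p ≫ v
    have hcomm : p ≫ v = u ≫ z := sq.w.symm
    have hfst : IsIso (pullback.fst v z) := by
      refine h (pullback.fst v z) inferInstance ⟨pullback.lift p u hcomm, ?_⟩
      simp [pullback.lift_fst]
    have lz : (inv (pullback.fst v z) ≫ pullback.snd v z) ≫ z = v := by
      rw [Category.assoc, ← pullback.condition, IsIso.inv_hom_id_assoc]
    refine ⟨⟨⟨inv (pullback.fst v z) ≫ pullback.snd v z, ?_, lz⟩⟩⟩
    rw [← cancel_mono z, Category.assoc, lz, sq.w]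

/-- Lifting a factorization along a mono across an extremal epi, using pullbacks. -/
lemma factor_through_of_extremal [HasFiniteLimits C] {X Y Z S : C} {f : X ⟶ Y}
    (hf : ∀ ⦃T : C⦄ (n : T ⟶ Y), Mono n → (∃ t, t ≫ n = f) → IsIso n)
    {m : S ⟶ Z} (hm : Mono m) {v : Y ⟶ Z} {u : X ⟶ S} (h : u ≫ m = f ≫ v) :
    ∃ s : Y ⟶ S, s ≫ m = v := by
  have hfst : IsIso (pullback.fst v m) := by
    refine hf (pullback.fst v m) inferInstance ⟨pullback.lift f u h.symm, ?_⟩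
    simp [pullback.lift_fst]
  exact ⟨inv (pullback.fst v m) ≫ pullback.snd v m, by simp [pullback.condition]⟩

end Aux

/-- A finitely complete pointed category (with finite coproducts) is unital
if and only if: for any pair of strong epimorphisms `d : X ⟶ D`, `c : X ⟶ C`
whose kernels `ker d`, `ker c` are jointly strongly epimorphic, the induced
morphism `⟨d, c⟩ : X ⟶ D × C` is a strong epimorphism. -/
theorem unital_iff_strong_epi_pairing (C : Type*) [Category C]
    [HasZeroObject C] [HasZeroMorphisms C] [HasFiniteLimits C]
    [HasFiniteCoproducts C] :
    IsUnital C ↔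
      ∀ (X D E : C) (d : X ⟶ D) (c : X ⟶ E),
        StrongEpi d → StrongEpi c →
        JointlyStrongEpi (kernel.ι d) (kernel.ι c) →
        StrongEpi (prod.lift d c) := by
  constructor
  · -- unital ⇒ condition
    intro hu X D E d c hd hc hker
    apply strongEpi_of_extremal
    intro S m hm ⟨t, ht⟩
    -- `k_c ≫ d` is extremal
    have extr_cd : ∀ ⦃T : C⦄ (n : T ⟶ D), Mono n →
        (∃ w, w ≫ n = kernel.ι c ≫ d) → IsIso n := by
      intro T n hn ⟨w, hw⟩
      have hπ : IsIso (pullback.fst d n) :=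
        hker (pullback.fst d n) inferInstance
          ⟨pullback.lift (kernel.ι d) 0 (by simp [kernel.condition]), by simp [pullback.lift_fst]⟩
          ⟨pullback.lift (kernel.ι c) w hw.symm, by simp [pullback.lift_fst]⟩
      -- d factors through n
      exact isIso_of_strongEpi_fac hd hn
        (t := inv (pullback.fst d n) ≫ pullback.snd d n) (by simp [pullback.condition])
    have extr_dc : ∀ ⦃T : C⦄ (n : T ⟶ E), Mono n →
        (∃ w, w ≫ n = kernel.ι d ≫ c) → IsIso n := by
      intro T n hn ⟨w, hw⟩
      have hπ : IsIso (pullback.fst c n) :=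
        hker (pullback.fst c n) inferInstance
          ⟨pullback.lift (kernel.ι d) w hw.symm, by simp [pullback.lift_fst]⟩
          ⟨pullback.lift (kernel.ι c) 0 (by simp [kernel.condition]), by simp [pullback.lift_fst]⟩
      exact isIso_of_strongEpi_fac hc hn
        (t := inv (pullback.fst c n) ≫ pullback.snd c n) (by simp [pullback.condition])
    -- first injection factors through m
    obtain ⟨s₁, hs₁⟩ := factor_through_of_extremal extr_cd hm
      (v := prod.lift (𝟙 D) (0 : D ⟶ E)) (u := kernel.ι c ≫ t)
      (by rw [Category.assoc, ht]; ext <;> simp [kernel.condition])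
    obtain ⟨s₂, hs₂⟩ := factor_through_of_extremal extr_dc hm
      (v := prod.lift (0 : E ⟶ D) (𝟙 E)) (u := kernel.ι d ≫ t)
      (by rw [Category.assoc, ht]; ext <;> simp [kernel.condition])
    exact hu D E m hm ⟨s₁, hs₁⟩ ⟨s₂, hs₂⟩
  · -- condition ⇒ unital
    intro h D E
    set d : (D ⨿ E : C) ⟶ D := coprod.desc (𝟙 D) 0 with hd_def
    set c : (D ⨿ E : C) ⟶ E := coprod.desc 0 (𝟙 E) with hc_def
    have hd : StrongEpi d := by
      apply strongEpi_of_extremal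
      intro S m hm ⟨t, ht⟩
      have : IsSplitEpi m := ⟨⟨⟨coprod.inl ≫ t, by
        rw [Category.assoc, ht]; simp [hd_def, coprod.inl_desc]⟩⟩⟩
      exact isIso_of_mono_of_isSplitEpi m
    have hc : StrongEpi c := by
      apply strongEpi_of_extremal
      intro S m hm ⟨t, ht⟩
      have : IsSplitEpi m := ⟨⟨⟨coprod.inr ≫ t, by
        rw [Category.assoc, ht]; simp [hc_def, coprod.inr_desc]⟩⟩⟩
      exact isIso_of_mono_of_isSplitEpi m
    have hker : JointlyStrongEpi (kernel.ι d) (kernel.ι c) := by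
      intro S m hm ⟨u, hu⟩ ⟨v, hv⟩
      have hinr : (kernel.lift d coprod.inr (by simp [hd_def, coprod.inr_desc]) ≫ u) ≫ m = coprod.inr := by
        rw [Category.assoc, hu]; simp
      have hinl : (kernel.lift c coprod.inl (by simp [hc_def, coprod.inl_desc]) ≫ v) ≫ m = coprod.inl := by
        rw [Category.assoc, hv]; simp
      have : IsSplitEpi m := ⟨⟨⟨coprod.desc (kernel.lift c coprod.inl (by simp [hc_def, coprod.inl_desc]) ≫ v)
          (kernel.lift d coprod.inr (by simp [hd_def, coprod.inr_desc]) ≫ u), by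
        ext
        · simpa [coprod.inl_desc] using hinl
        · simpa [coprod.inr_desc] using hinr⟩⟩⟩
      exact isIso_of_mono_of_isSplitEpi m
    have hp : StrongEpi (prod.lift d c) := h _ _ _ d c hd hc hker
    intro S m hm ⟨u, hu⟩ ⟨v, hv⟩
    have hfac : coprod.desc u v ≫ m = prod.lift d c := by
      ext <;> simp [← Category.assoc, hu, hv, hd_def, hc_def, coprod.inl_desc, coprod.inr_desc, prod.lift_fst, prod.lift_snd]
    exact isIso_of_strongEpi_fac hp hm hfac
end

section
/- In a variety of Ω-groups 𝒜 with subvariety ℬ, if the relative commutator [−,−]_ℬ is stable under regular images (p[M,N]_ℬ = [pM, pN]_ℬ for all surjections p and normal subobjects M, N), then every abelian object of 𝒜 lies in ℬ. Concretely in the group-theoretic model: if a binary operation [−,−] on normal subgroups satisfies [M,N] ≤ M ∩ N, p[M,N] = [pM,pN] for surjective p, and the property that [A,A] = 1 characterizes membership in ℬ, then every abelian group object satisfies [A,A] = 1. -/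
/-- If a binary operation `c` on normal subgroups of groups satisfies
`c M N ≤ M ⊓ N` and is stable under regular images (`p (c M N) = c (p M) (p N)`
for surjective `p`), then every abelian group object `A` (one admitting a
multiplication homomorphism `π : A × A → A` with `π(a,1) = a = π(1,a)`)
satisfies `c A A = 1`. -/
theorem abelian_in_birkhoff_of_stable
    (c : ∀ (G : Type) [Group G], Subgroup G → Subgroup G → Subgroup G)
    (hle : ∀ (G : Type) [Group G] (M N : Subgroup G),
      M.Normal → N.Normal → c G M N ≤ M ⊓ N)
    (hmap : ∀ (G H : Type) [Group G] [Group H] (p : G →* H),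
      Function.Surjective p → ∀ (M N : Subgroup G), M.Normal → N.Normal →
        Subgroup.map p (c G M N) = c H (Subgroup.map p M) (Subgroup.map p N))
    (A : Type) [Group A] (π : A × A →* A)
    (hπ₁ : ∀ a : A, π (a, 1) = a) (hπ₂ : ∀ a : A, π (1, a) = a) :
    c A ⊤ ⊤ = ⊥ := by
  set M : Subgroup (A × A) := (⊤ : Subgroup A).prod ⊥ with hM
  set N : Subgroup (A × A) := (⊥ : Subgroup A).prod ⊤ with hN
  have hMn : M.Normal := Subgroup.prod_normal ⊤ ⊥
  have hNn : N.Normal := Subgroup.prod_normal ⊥ ⊤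
  have hsurj : Function.Surjective π := fun a => ⟨(a, 1), hπ₁ a⟩
  have hMN : c (A × A) M N = ⊥ := by
    refine le_antisymm (fun x hx => ?_) bot_le
    have := hle (A × A) M N hMn hNn hx
    obtain ⟨⟨-, h1⟩, h2, -⟩ := this
    simp only [Subgroup.mem_bot] at h1 h2 ⊢
    exact Prod.ext h2 h1
  have hmapM : Subgroup.map π M = ⊤ := by
    refine le_antisymm le_top fun a _ => ?_
    exact ⟨(a, 1), ⟨trivial, rfl⟩, hπ₁ a⟩
  have hmapN : Subgroup.map π N = ⊤ := by
    refine le_antisymm le_top fun a _ => ?_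
    exact ⟨(1, a), ⟨rfl, trivial⟩, hπ₂ a⟩
  have := hmap (A × A) A π hsurj M N hMn hNn
  rw [hMN, hmapM, hmapN] at this
  rw [← this, Subgroup.map_bot]
end
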